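/- Let $1 < p < \infty$ and let $T$ be an operator with kernel $K$ on $\mathbb{R}^n$ satisfying $|K(x,y)| \lesssim |x-y|^{-n}$. Suppose $\sigma, \omega$ are doubling measures, and suppose that for all pairs of adjacent cubes $J, J^*$ of equal sidelength there exist pairwise disjoint subcubes $\{J_k\} \subset J$ and $\{J_k^*\} \subset J^*$ with $\ell(J_k) = \ell(J_k^*)$, $\mathrm{dist}(J_k, J_k^*) \approx \ell(J_k)$, and $\int\int \frac{\mathbf{1}_J(y) \mathbf{1}_{J^*}(x)}{|x-y|^n} d\sigma(y) d\omega(x) \lesssim \sum_k \int \mathbf{1}_{J_k^*}(x) (E_{J_k} \sigma) \, d\omega(x)$. Then the quadratic weak boundedness property constant satisfies $\mathcal{WBP}_{T,p}^{\ell^2}(\sigma, \omega) \lesssim A_p^{\ell^2, \mathrm{offset}}(\sigma, \omega)$. -/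

import Mathlib

open MeasureTheory Set ENNReal

/-- The axis-parallel half-open cube with corner `a` and sidelength `l`. -/
def cubeSet {n : ℕ} (a : Fin n → ℝ) (l : ℝ) : Set (Fin n → ℝ) :=
  {x | ∀ i, x i ∈ Set.Ico (a i) (a i + l)}

/-- The concentric dilate `rQ` of the cube `Q` with corner `a` and sidelength `l`. -/
def dilateCube {n : ℕ} (a : Fin n → ℝ) (l r : ℝ) : Set (Fin n → ℝ) :=
  cubeSet (fun i => a i - (r - 1) * l / 2) (r * l)

/-- `μ` is doubling with doubling constant `Cd`. -/
def DoublingWith {n : ℕ} (μ : Measure (Fin n → ℝ)) (Cd : ℝ≥0∞) : Prop :=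
  ∀ (a : Fin n → ℝ) (l : ℝ), 0 < l → μ (dilateCube a l 2) ≤ Cd * μ (cubeSet a l)

/-- Two distinct cubes of equal sidelength `l` that are adjacent, i.e. both are
dyadic children of a common cube of sidelength `2l`. -/
def AdjacentSiblings {n : ℕ} (a a' : Fin n → ℝ) (l : ℝ) : Prop :=
  ∃ (a0 : Fin n → ℝ) (ε ε' : Fin n → Bool), ε ≠ ε' ∧
    (∀ i, a i = a0 i + (if ε i then l else 0)) ∧
    (∀ i, a' i = a0 i + (if ε' i then l else 0))

/-- The indicator (with value `1` in `ℝ≥0∞`) of the cube with corner `a`, side `l`. -/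
noncomputable def cubeInd {n : ℕ} (a : Fin n → ℝ) (l : ℝ) (x : Fin n → ℝ) : ℝ≥0∞ :=
  (cubeSet a l).indicator (fun _ => (1 : ℝ≥0∞)) x

/-- The average `E_Q μ = |Q|_μ / |Q|`. -/
noncomputable def Eavg {n : ℕ} (μ : Measure (Fin n → ℝ)) (a : Fin n → ℝ) (l : ℝ) : ℝ≥0∞ :=
  μ (cubeSet a l) / ENNReal.ofReal (l ^ n)

/-- The quadratic weak boundedness constant `𝒲ℬ𝒫^{ℓ²}_{T,p}(σ,ω)`, as the supremum of
the relevant ratios over countable families of adjacent equal-sidelength pairs of cubes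
and coefficient sequences. -/
noncomputable def WBPconst {n : ℕ} (K : (Fin n → ℝ) → (Fin n → ℝ) → ℝ) (p p' : ℝ)
    (σ ω : Measure (Fin n → ℝ)) : ℝ≥0∞ :=
  ⨆ (ac : ℕ → (Fin n → ℝ)) (ac' : ℕ → (Fin n → ℝ)) (ls : ℕ → ℝ)
    (_ : ∀ k, 0 < ls k ∧ AdjacentSiblings (ac k) (ac' k) (ls k))
    (aa : ℕ → ℝ) (bb : ℕ → ℝ),
    (∑' k : ℕ, ENNReal.ofReal
        |∫ x in cubeSet (ac' k) (ls k),
            aa k * (∫ y in cubeSet (ac k) (ls k), K x y ∂σ) * bb k ∂ω|) /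
      ((∫⁻ x, (∑' k : ℕ, ENNReal.ofReal ((aa k) ^ 2) * cubeInd (ac k) (ls k) x) ^ (p / 2)
          ∂σ) ^ (1 / p) *
       (∫⁻ x, (∑' k : ℕ, ENNReal.ofReal ((bb k) ^ 2) * cubeInd (ac' k) (ls k) x) ^ (p' / 2)
          ∂ω) ^ (1 / p'))

/-- The offset quadratic Muckenhoupt constant `A_p^{ℓ²,offset}(σ,ω)` with offset
parameter `C0`, as the supremum of ratios over countable families of equal-sidelength
pairs of cubes at distance at most `C0` times the sidelength. -/
noncomputable def AoffConst {n : ℕ} (p C0 : ℝ) (σ ω : Measure (Fin n → ℝ)) : ℝ≥0∞ :=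
  ⨆ (ac : ℕ → (Fin n → ℝ)) (ac' : ℕ → (Fin n → ℝ)) (ls : ℕ → ℝ)
    (_ : ∀ k, 0 < ls k ∧ dist (ac k) (ac' k) ≤ C0 * ls k) (aa : ℕ → ℝ),
    (∫⁻ x, (∑' k : ℕ, ENNReal.ofReal ((aa k) ^ 2) * (Eavg σ (ac k) (ls k)) ^ 2 *
        cubeInd (ac' k) (ls k) x) ^ (p / 2) ∂ω) ^ (1 / p) /
    (∫⁻ x, (∑' k : ℕ, ENNReal.ofReal ((aa k) ^ 2) *
        cubeInd (ac k) (ls k) x) ^ (p / 2) ∂σ) ^ (1 / p)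
lemma measurableSet_cubeSet {n : ℕ} (a : Fin n → ℝ) (l : ℝ) : MeasurableSet (cubeSet a l) := by
  have : cubeSet a l = Set.pi Set.univ (fun i => Set.Ico (a i) (a i + l)) := by
    ext x; simp [cubeSet, Set.mem_pi]
  rw [this]
  exact MeasurableSet.univ_pi fun i => measurableSet_Ico

lemma measurable_cubeInd {n : ℕ} (a : Fin n → ℝ) (l : ℝ) : Measurable (cubeInd a l) :=
  measurable_const.indicator (measurableSet_cubeSet a l)

lemma cubeInd_le_one {n : ℕ} (a : Fin n → ℝ) (l : ℝ) (x : Fin n → ℝ) : cubeInd a l x ≤ 1 := by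
  unfold cubeInd; by_cases h : x ∈ cubeSet a l <;> simp [h]

lemma cubeInd_mono {n : ℕ} {a b : Fin n → ℝ} {l m : ℝ} (h : cubeSet a l ⊆ cubeSet b m) :
    ∀ x, cubeInd a l x ≤ cubeInd b m x := by
  intro x; unfold cubeInd
  by_cases hx : x ∈ cubeSet a l
  · simp [hx, h hx]
  · simp [hx]

lemma cubeSet_sidelength_zero {n : ℕ} (hn : 1 ≤ n) (a : Fin n → ℝ) : cubeSet a 0 = ∅ := by
  ext x
  simp only [cubeSet, Set.mem_setOf_eq, Set.mem_empty_iff_false, iff_false]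
  intro h
  have := h ⟨0, hn⟩
  simp at this

lemma Eavg_sidelength_zero {n : ℕ} (hn : 1 ≤ n) (σ : Measure (Fin n → ℝ)) (a : Fin n → ℝ) :
    Eavg σ a 0 = 0 := by
  unfold Eavg
  rw [cubeSet_sidelength_zero hn a]
  simp

lemma adjacent_disjoint {n : ℕ} {a a' : Fin n → ℝ} {l : ℝ} (hl : 0 < l)
    (h : AdjacentSiblings a a' l) : Disjoint (cubeSet a l) (cubeSet a' l) := by
  obtain ⟨a0, ε, ε', hne, ha, ha'⟩ := h
  rw [Set.disjoint_left]
  intro x hx hx'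
  obtain ⟨i, hi⟩ := Function.ne_iff.mp hne
  have h1 := hx i
  have h2 := hx' i
  rw [ha i] at h1
  rw [ha' i] at h2
  simp only [cubeSet, Set.mem_Ico] at h1 h2
  cases hε : ε i <;> cases hε' : ε' i <;> rw [hε] at h1 hi <;> rw [hε'] at h2 hi
  · exact hi rfl
  · simp only [Bool.false_eq_true, if_true, if_false] at h1 h2
    linarith [h1.1, h1.2, h2.1, h2.2]
  · simp only [Bool.false_eq_true, if_true, if_false] at h1 h2
    linarith [h1.1, h1.2, h2.1, h2.2]
  · exact hi rfl

lemma tsum_mul_le_sqrt (f g : ℕ → ℝ≥0∞) :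
    ∑' k, f k * g k ≤ (∑' k, (f k)^2) ^ ((1:ℝ)/2) * (∑' k, (g k)^2) ^ ((1:ℝ)/2) := by
  have h22 : (2:ℝ).HolderConjugate 2 := Real.holderConjugate_iff.mpr ⟨one_lt_two, by norm_num⟩
  have := ENNReal.lintegral_mul_le_Lp_mul_Lq (Measure.count : Measure ℕ) h22
    (f := f) (g := g) (measurable_of_countable f).aemeasurable
    (measurable_of_countable g).aemeasurable
  calc ∑' k, f k * g k = ∫⁻ a, (f * g) a ∂(Measure.count : Measure ℕ) := (lintegral_count _).symm
    _ ≤ (∫⁻ a, f a ^ (2:ℝ) ∂(Measure.count : Measure ℕ)) ^ ((1:ℝ)/2) *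
        (∫⁻ a, g a ^ (2:ℝ) ∂(Measure.count : Measure ℕ)) ^ ((1:ℝ)/2) := by
        simpa using this
    _ = (∑' k, (f k)^2) ^ ((1:ℝ)/2) * (∑' k, (g k)^2) ^ ((1:ℝ)/2) := by
        rw [lintegral_count, lintegral_count]
        congr 2 <;> exact tsum_congr fun k => ENNReal.rpow_two _

lemma lintegral_cubeInd {n : ℕ} (μ : Measure (Fin n → ℝ)) (a : Fin n → ℝ) (l : ℝ) :
    ∫⁻ x, cubeInd a l x ∂μ = μ (cubeSet a l) := by
  unfold cubeInd
  rw [lintegral_indicator_const (measurableSet_cubeSet a l)]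
  exact one_mul _

lemma term_zero_of_lintegral_zero {n : ℕ} (μ : Measure (Fin n → ℝ)) {q : ℝ} (hq : 0 < q)
    (d : ℕ → ℝ≥0∞) (hd : ∀ k, d k ≠ ∞) (A : ℕ → (Fin n → ℝ)) (L : ℕ → ℝ)
    (h : (∫⁻ x, (∑' k, d k * cubeInd (A k) (L k) x) ^ q ∂μ) = 0) (k : ℕ) :
    d k * μ (cubeSet (A k) (L k)) = 0 := by
  have hmG : Measurable fun x => ∑' k, d k * cubeInd (A k) (L k) x :=
    Measurable.ennreal_tsum fun k => (measurable_cubeInd _ _).const_mul _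
  have h0 := (lintegral_eq_zero_iff (hmG.pow_const q)).mp h
  have hk : (fun x => d k * cubeInd (A k) (L k) x) =ᵐ[μ] 0 := by
    filter_upwards [h0] with x hx
    simp only [Pi.zero_apply] at hx ⊢
    rcases ENNReal.rpow_eq_zero_iff.mp hx with ⟨hG, _⟩ | ⟨_, hq'⟩
    · exact le_antisymm (hG ▸ ENNReal.le_tsum k) zero_le
    · linarith
  have h2 : ∫⁻ x, d k * cubeInd (A k) (L k) x ∂μ = 0 := by
    rw [lintegral_congr_ae hk]; simp
  rwa [lintegral_const_mul' _ _ (hd k), lintegral_cubeInd] at h2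

lemma tsum_coef_cubeInd_le {n : ℕ} (c : ℕ → ℝ≥0∞) (B : ℕ → Fin n → ℝ) (L : ℕ → ℝ)
    (hdisj : Pairwise fun j j' => Disjoint (cubeSet (B j) (L j)) (cubeSet (B j') (L j')))
    (x : Fin n → ℝ) (D : ℝ≥0∞)
    (hD : ∀ j, x ∈ cubeSet (B j) (L j) → c j ≤ D) :
    ∑' j, c j * cubeInd (B j) (L j) x ≤ D := by
  by_cases hx : ∃ j0, x ∈ cubeSet (B j0) (L j0)
  · obtain ⟨j0, hj0⟩ := hx
    have heq : ∑' j, c j * cubeInd (B j) (L j) x = c j0 * cubeInd (B j0) (L j0) x := by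
      refine tsum_eq_single j0 fun j hj => ?_
      have hxj : x ∉ cubeSet (B j) (L j) :=
        fun hxj => Set.disjoint_left.mp (hdisj hj) hxj hj0
      unfold cubeInd
      rw [Set.indicator_of_notMem hxj, mul_zero]
    rw [heq]
    unfold cubeInd
    rw [Set.indicator_of_mem hj0, mul_one]
    exact hD j0 hj0
  · push_neg at hx
    have hz : ∀ j, c j * cubeInd (B j) (L j) x = 0 := fun j => by
      unfold cubeInd; rw [Set.indicator_of_notMem (hx j), mul_zero]
    simp [hz]

lemma numerator_bound {n : ℕ} {CK : ℝ} (hCK : 0 ≤ CK)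
    (K : (Fin n → ℝ) → (Fin n → ℝ) → ℝ)
    (hK : ∀ x y, x ≠ y → |K x y| ≤ CK / dist x y ^ n)
    (σ ω : Measure (Fin n → ℝ)) [SFinite σ]
    (Q Q' : Set (Fin n → ℝ)) (hQ : MeasurableSet Q) (hdisj : Disjoint Q Q')
    (aA bB : ℝ) :
    ENNReal.ofReal |∫ x in Q', aA * (∫ y in Q, K x y ∂σ) * bB ∂ω| ≤
      ENNReal.ofReal |aA| * ENNReal.ofReal |bB| * (ENNReal.ofReal CK *
        ∫⁻ x in Q', (∫⁻ y in Q, ENNReal.ofReal (1 / dist x y ^ n) ∂σ) ∂ω) := by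
  set I2 : (Fin n → ℝ) → ℝ≥0∞ :=
    fun x => ∫⁻ y in Q, ENNReal.ofReal (1 / dist x y ^ n) ∂σ with hI2
  have hI2meas : Measurable I2 := by
    apply Measurable.lintegral_prod_right
      (f := fun x y => ENNReal.ofReal (1 / dist x y ^ n))
    exact ENNReal.measurable_ofReal.comp
      (measurable_const.div (measurable_dist.pow_const n))
  have key : ∀ x ∈ Q', ‖aA * (∫ y in Q, K x y ∂σ) * bB‖ₑ ≤
      ENNReal.ofReal |aA| * (ENNReal.ofReal CK * I2 x) * ENNReal.ofReal |bB| := by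
    intro x hx
    have hI : ‖∫ y in Q, K x y ∂σ‖ₑ ≤ ENNReal.ofReal CK * I2 x := by
      refine le_trans (enorm_integral_le_lintegral_enorm _) ?_
      rw [hI2]
      rw [← lintegral_const_mul' _ _ ENNReal.ofReal_ne_top]
      refine setLIntegral_mono
        ((ENNReal.measurable_ofReal.comp
          (measurable_const.div ((measurable_const.dist measurable_id).pow_const n))).const_mul _)
        fun y hy => ?_
      have hxy : x ≠ y := fun h => Set.disjoint_left.mp hdisj (h ▸ hy) hx
      rw [Real.enorm_eq_ofReal_abs]
      refine le_trans (ENNReal.ofReal_le_ofReal (hK x y hxy)) ?_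
      rw [div_eq_mul_one_div, ENNReal.ofReal_mul hCK]
    calc ‖aA * (∫ y in Q, K x y ∂σ) * bB‖ₑ
        = ENNReal.ofReal |aA| * ‖∫ y in Q, K x y ∂σ‖ₑ * ENNReal.ofReal |bB| := by
          rw [Real.enorm_eq_ofReal_abs, Real.enorm_eq_ofReal_abs, abs_mul, abs_mul,
            ENNReal.ofReal_mul (by positivity), ENNReal.ofReal_mul (abs_nonneg _)]
      _ ≤ _ := by
          exact mul_le_mul' (mul_le_mul' le_rfl hI) le_rfl
  calc ENNReal.ofReal |∫ x in Q', aA * (∫ y in Q, K x y ∂σ) * bB ∂ω|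
      = ‖∫ x in Q', aA * (∫ y in Q, K x y ∂σ) * bB ∂ω‖ₑ :=
        (Real.enorm_eq_ofReal_abs _).symm
    _ ≤ ∫⁻ x in Q', ‖aA * (∫ y in Q, K x y ∂σ) * bB‖ₑ ∂ω :=
        enorm_integral_le_lintegral_enorm _
    _ ≤ ∫⁻ x in Q', ENNReal.ofReal |aA| * (ENNReal.ofReal CK * I2 x) * ENNReal.ofReal |bB| ∂ω :=
        setLIntegral_mono (((hI2meas.const_mul _).const_mul _).mul_const _) key
    _ = ENNReal.ofReal |aA| * ENNReal.ofReal |bB| * (ENNReal.ofReal CK * ∫⁻ x in Q', I2 x ∂ω) := by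
        have harr : ∀ x, ENNReal.ofReal |aA| * (ENNReal.ofReal CK * I2 x) * ENNReal.ofReal |bB|
            = (ENNReal.ofReal |aA| * ENNReal.ofReal |bB| * ENNReal.ofReal CK) * I2 x := by
          intro x; ring
        simp_rw [harr]
        rw [lintegral_const_mul' _ _ (by
          exact ENNReal.mul_ne_top (ENNReal.mul_ne_top ENNReal.ofReal_ne_top
            ENNReal.ofReal_ne_top) ENNReal.ofReal_ne_top)]
        ring


/-- For doubling measures, the quadratic weak boundedness property follows from the
offset quadratic Muckenhoupt condition, given the Whitney-type decomposition hypothesis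
for adjacent cubes. -/
theorem stmt14 (n : ℕ) (hn : 1 ≤ n) (p p' : ℝ) (hp : 1 < p) (hpp' : 1 / p + 1 / p' = 1)
    (CK c1 c2 Ch : ℝ) (hCK : 0 ≤ CK) (hc1 : 0 < c1) (hc2 : 0 < c2) (hCh : 0 < Ch)
    (Cdσ Cdω : ℝ≥0∞) (hCdσ : Cdσ < ∞) (hCdω : Cdω < ∞) :
    ∃ C0 : ℝ, 0 < C0 ∧ ∃ C : ℝ≥0∞, 0 < C ∧ C < ∞ ∧
      ∀ (K : (Fin n → ℝ) → (Fin n → ℝ) → ℝ), Measurable (Function.uncurry K) →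
        (∀ x y, x ≠ y → |K x y| ≤ CK / dist x y ^ n) →
        ∀ (σ ω : Measure (Fin n → ℝ)) [IsLocallyFiniteMeasure σ] [IsLocallyFiniteMeasure ω],
          DoublingWith σ Cdσ → DoublingWith ω Cdω →
          (∀ (a a' : Fin n → ℝ) (l : ℝ), 0 < l → AdjacentSiblings a a' l →
            ∃ (bc bc' : ℕ → (Fin n → ℝ)) (ls : ℕ → ℝ),
              (∀ k, 0 ≤ ls k) ∧
              (∀ k, cubeSet (bc k) (ls k) ⊆ cubeSet a l) ∧
              (∀ k, cubeSet (bc' k) (ls k) ⊆ cubeSet a' l) ∧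
              (Pairwise fun k k' =>
                Disjoint (cubeSet (bc k) (ls k)) (cubeSet (bc k') (ls k'))) ∧
              (Pairwise fun k k' =>
                Disjoint (cubeSet (bc' k) (ls k)) (cubeSet (bc' k') (ls k'))) ∧
              (∀ k, 0 < ls k →
                c1 * ls k ≤ dist (bc k) (bc' k) ∧ dist (bc k) (bc' k) ≤ c2 * ls k) ∧
              (∫⁻ x in cubeSet a' l,
                  (∫⁻ y in cubeSet a l, ENNReal.ofReal (1 / dist x y ^ n) ∂σ) ∂ω)
                ≤ ENNReal.ofReal Ch *
                  ∑' k : ℕ, Eavg σ (bc k) (ls k) * ω (cubeSet (bc' k) (ls k))) →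
          WBPconst K p p' σ ω ≤ C * AoffConst p C0 σ ω := by
  classical
  have hp0 : 0 < p := lt_trans one_pos hp
  have hpq : p.HolderConjugate p' := Real.holderConjugate_iff.mpr ⟨hp, by simpa [one_div] using hpp'⟩
  have hp'0 : 0 < p' := hpq.symm.pos
  have hp2 : 0 < p / 2 := by positivity
  have hp'2 : 0 < p' / 2 := by positivity
  have hip : 0 < 1 / p := by positivity
  have hip' : 0 < 1 / p' := by positivity
  refine ⟨c2 + 1, by linarith, ENNReal.ofReal ((CK + 1) * Ch), ?_, ENNReal.ofReal_lt_top, ?_⟩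
  · exact ENNReal.ofReal_pos.mpr (by nlinarith)
  intro K hKmeas hKb σ ω hσfin hωfin hdσ hdω hWhit
  unfold WBPconst
  refine iSup_le fun ac => iSup_le fun ac' => iSup_le fun ls => iSup_le fun hls =>
    iSup_le fun aa => iSup_le fun bb => ?_
  choose bc bc' lss h0 hsub hsub' hdis hdis' hdist hint using
    fun k => hWhit (ac k) (ac' k) (ls k) (hls k).1 (hls k).2
  set Iσ := ∫⁻ x, (∑' k : ℕ, ENNReal.ofReal ((aa k) ^ 2) * cubeInd (ac k) (ls k) x) ^ (p / 2) ∂σ with hIσ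
  set Iω := ∫⁻ x, (∑' k : ℕ, ENNReal.ofReal ((bb k) ^ 2) * cubeInd (ac' k) (ls k) x) ^ (p' / 2) ∂ω with hIω
  set NUM := ∑' k : ℕ, ENNReal.ofReal
        |∫ x in cubeSet (ac' k) (ls k),
            aa k * (∫ y in cubeSet (ac k) (ls k), K x y ∂σ) * bb k ∂ω| with hNUM
  -- degenerate cases
  by_cases hσ0 : Iσ = 0
  · have hNUM0 : NUM = 0 := by
      rw [hNUM]
      convert tsum_zero with k
      have hz := term_zero_of_lintegral_zero σ hp2 (fun k => ENNReal.ofReal ((aa k) ^ 2))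
        (fun k => ENNReal.ofReal_ne_top) ac ls (hIσ ▸ hσ0) k
      rcases mul_eq_zero.mp hz with hz | hz
      · have haz : aa k = 0 := by
          have := ENNReal.ofReal_eq_zero.mp hz
          nlinarith [sq_nonneg (aa k)]
        simp [haz]
      · have hres : σ.restrict (cubeSet (ac k) (ls k)) = 0 := Measure.restrict_eq_zero.mpr hz
        simp [hres]
    rw [hNUM0, ENNReal.zero_div]
    exact zero_le
  by_cases hω0 : Iω = 0
  · have hNUM0 : NUM = 0 := by
      rw [hNUM]
      convert tsum_zero with k
      have hz := term_zero_of_lintegral_zero ω hp'2 (fun k => ENNReal.ofReal ((bb k) ^ 2))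
        (fun k => ENNReal.ofReal_ne_top) ac' ls (hIω ▸ hω0) k
      rcases mul_eq_zero.mp hz with hz | hz
      · have hbz : bb k = 0 := by
          have := ENNReal.ofReal_eq_zero.mp hz
          nlinarith [sq_nonneg (bb k)]
        simp [hbz]
      · have hres : ω.restrict (cubeSet (ac' k) (ls k)) = 0 := Measure.restrict_eq_zero.mpr hz
        simp [hres]
    rw [hNUM0, ENNReal.zero_div]
    exact zero_le
  by_cases hσt : Iσ = ∞
  · have h1 : Iω ^ (1 / p') ≠ 0 := by
      rw [Ne, ENNReal.rpow_eq_zero_iff]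
      push_neg
      exact ⟨fun h => absurd h hω0, fun _ => le_of_lt hip'⟩
    rw [hσt, ENNReal.top_rpow_of_pos hip, ENNReal.top_mul h1, ENNReal.div_top]
    exact zero_le
  by_cases hωt : Iω = ∞
  · have h1 : Iσ ^ (1 / p) ≠ 0 := by
      rw [Ne, ENNReal.rpow_eq_zero_iff]
      push_neg
      exact ⟨fun h => absurd h hσ0, fun _ => le_of_lt hip⟩
    rw [hωt, ENNReal.top_rpow_of_pos hip', ENNReal.mul_top h1, ENNReal.div_top]
    exact zero_le
  -- main case
  set e : ℕ ≃ ℕ × ℕ := (Denumerable.eqv (ℕ × ℕ)).symm with he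
  set PB : ℕ × ℕ → (Fin n → ℝ) := fun pr => if 0 < lss pr.1 pr.2 then bc pr.1 pr.2 else 0 with hPB
  set PB' : ℕ × ℕ → (Fin n → ℝ) := fun pr => if 0 < lss pr.1 pr.2 then bc' pr.1 pr.2 else 0 with hPB'
  set PL : ℕ × ℕ → ℝ := fun pr => if 0 < lss pr.1 pr.2 then lss pr.1 pr.2 else 1 with hPL
  set PA : ℕ × ℕ → ℝ := fun pr => if 0 < lss pr.1 pr.2 then aa pr.1 else 0 with hPA
  -- the Aoff family bound
  have hfam : ∀ m : ℕ, 0 < PL (e m) ∧ dist (PB (e m)) (PB' (e m)) ≤ (c2 + 1) * PL (e m) := by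
    intro m
    by_cases hm : 0 < lss (e m).1 (e m).2
    · simp only [hPB, hPB', hPL, if_pos hm]
      refine ⟨hm, le_trans ((hdist _ _ hm).2) ?_⟩
      nlinarith
    · simp only [hPB, hPB', hPL, if_neg hm]
      simp only [dist_self]
      constructor
      · norm_num
      · positivity
  have hAoff : (∫⁻ x, (∑' m : ℕ, ENNReal.ofReal ((PA (e m)) ^ 2) *
          (Eavg σ (PB (e m)) (PL (e m))) ^ 2 * cubeInd (PB' (e m)) (PL (e m)) x) ^ (p / 2)
          ∂ω) ^ (1 / p) /
      (∫⁻ x, (∑' m : ℕ, ENNReal.ofReal ((PA (e m)) ^ 2) *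
          cubeInd (PB (e m)) (PL (e m)) x) ^ (p / 2) ∂σ) ^ (1 / p) ≤
      AoffConst p (c2 + 1) σ ω := by
    unfold AoffConst
    exact le_iSup_of_le (fun m => PB (e m)) (le_iSup_of_le (fun m => PB' (e m))
      (le_iSup_of_le (fun m => PL (e m)) (le_iSup_of_le hfam
        (le_iSup_of_le (fun m => PA (e m)) le_rfl))))
  -- square-root helpers
  have hsq : ∀ y : ℝ≥0∞, (y ^ ((1:ℝ)/2)) ^ 2 = y := fun y => by
    rw [← ENNReal.rpow_two, ← ENNReal.rpow_mul]; norm_num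
  have hsqrt_sq : ∀ y : ℝ≥0∞, (y ^ 2) ^ ((1:ℝ)/2) = y := fun y => by
    rw [← ENNReal.rpow_two, ← ENNReal.rpow_mul]; norm_num
  have hofReal_sq : ∀ r : ℝ, ENNReal.ofReal (r ^ 2) = (ENNReal.ofReal |r|) ^ 2 := fun r => by
    rw [← sq_abs, ENNReal.ofReal_pow (abs_nonneg r)]
  -- Whitney sums
  set W : ℕ → (Fin n → ℝ) → ℝ≥0∞ := fun k x =>
    ∑' j, Eavg σ (bc k j) (lss k j) * cubeInd (bc' k j) (lss k j) x with hW
  set W2 : ℕ → (Fin n → ℝ) → ℝ≥0∞ := fun k x =>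
    ∑' j, (Eavg σ (bc k j) (lss k j)) ^ 2 * cubeInd (bc' k j) (lss k j) x with hW2
  have hmW : ∀ k, Measurable (W k) := fun k => by
    simp only [hW]
    exact Measurable.ennreal_tsum fun j => (measurable_cubeInd _ _).const_mul _
  have hmW2 : ∀ k, Measurable (W2 k) := fun k => by
    simp only [hW2]
    exact Measurable.ennreal_tsum fun j => (measurable_cubeInd _ _).const_mul _
  have hmA' : Measurable fun x => ∑' k, ENNReal.ofReal ((aa k) ^ 2) * W2 k x :=
    Measurable.ennreal_tsum fun k => (hmW2 k).const_mul _
  have hmFω : Measurable fun x => ∑' k, ENNReal.ofReal ((bb k) ^ 2) * cubeInd (ac' k) (ls k) x :=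
    Measurable.ennreal_tsum fun k => (measurable_cubeInd _ _).const_mul _
  -- identification of the reindexed Aoff numerator integrand
  have hAid : ∀ x, (∑' m : ℕ, ENNReal.ofReal ((PA (e m)) ^ 2) *
        (Eavg σ (PB (e m)) (PL (e m))) ^ 2 * cubeInd (PB' (e m)) (PL (e m)) x) =
      ∑' k : ℕ, ENNReal.ofReal ((aa k) ^ 2) * W2 k x := by
    intro x
    rw [Equiv.tsum_eq e (fun pr => ENNReal.ofReal ((PA pr) ^ 2) *
      (Eavg σ (PB pr) (PL pr)) ^ 2 * cubeInd (PB' pr) (PL pr) x)]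
    rw [ENNReal.tsum_prod']
    refine tsum_congr fun k => ?_
    simp only [hW2]
    rw [← ENNReal.tsum_mul_left]
    refine tsum_congr fun j => ?_
    by_cases hj : 0 < lss k j
    · simp only [hPB, hPB', hPL, hPA, if_pos hj]
      ring
    · have hj0 : lss k j = 0 := le_antisymm (not_lt.mp hj) (h0 k j)
      simp only [hPB, hPB', hPL, hPA, if_neg hj]
      rw [hj0, Eavg_sidelength_zero hn]
      simp
  -- comparison of the reindexed Aoff denominator integrand with the WBP one
  have hG1le : ∀ x, (∑' m : ℕ, ENNReal.ofReal ((PA (e m)) ^ 2) *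
      cubeInd (PB (e m)) (PL (e m)) x) ≤
      ∑' k : ℕ, ENNReal.ofReal ((aa k) ^ 2) * cubeInd (ac k) (ls k) x := by
    intro x
    rw [Equiv.tsum_eq e (fun pr => ENNReal.ofReal ((PA pr) ^ 2) * cubeInd (PB pr) (PL pr) x)]
    rw [ENNReal.tsum_prod']
    refine ENNReal.tsum_le_tsum fun k => ?_
    have step1 : ∀ j : ℕ, ENNReal.ofReal ((PA (k, j)) ^ 2) * cubeInd (PB (k, j)) (PL (k, j)) x ≤
        ENNReal.ofReal ((aa k) ^ 2) * cubeInd (bc k j) (lss k j) x := by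
      intro j
      by_cases hj : 0 < lss k j
      · simp only [hPB, hPL, hPA, if_pos hj]
        exact le_rfl
      · simp only [hPA, if_neg hj]
        simp
    refine le_trans (ENNReal.tsum_le_tsum step1) ?_
    refine tsum_coef_cubeInd_le _ _ _ (hdis k) x _ fun j hj => ?_
    unfold cubeInd
    rw [Set.indicator_of_mem (hsub k j hj), mul_one]
  -- pointwise Cauchy-Schwarz
  have hCS : ∀ x, (∑' k, ENNReal.ofReal |aa k| * ENNReal.ofReal |bb k| * W k x) ≤
      (∑' k, ENNReal.ofReal ((aa k) ^ 2) * W2 k x) ^ ((1:ℝ)/2) *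
      (∑' k, ENNReal.ofReal ((bb k) ^ 2) * cubeInd (ac' k) (ls k) x) ^ ((1:ℝ)/2) := by
    intro x
    set u : ℕ → ℝ≥0∞ := fun k => (ENNReal.ofReal ((aa k) ^ 2) * W2 k x) ^ ((1:ℝ)/2) with hu
    set v : ℕ → ℝ≥0∞ := fun k =>
      (ENNReal.ofReal ((bb k) ^ 2) * cubeInd (ac' k) (ls k) x) ^ ((1:ℝ)/2) with hv
    have hterm : ∀ k, ENNReal.ofReal |aa k| * ENNReal.ofReal |bb k| * W k x ≤ u k * v k := by
      intro k
      simp only [hW]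
      rw [← ENNReal.tsum_mul_left]
      have hre : ∀ j, ENNReal.ofReal |aa k| * ENNReal.ofReal |bb k| *
          (Eavg σ (bc k j) (lss k j) * cubeInd (bc' k j) (lss k j) x) =
          (ENNReal.ofReal |aa k| * ENNReal.ofReal |bb k| * Eavg σ (bc k j) (lss k j)) *
          cubeInd (bc' k j) (lss k j) x := fun j => by ring
      rw [tsum_congr hre]
      refine tsum_coef_cubeInd_le _ _ _ (hdis' k) x _ fun j hj => ?_
      have h1 : (Eavg σ (bc k j) (lss k j)) ^ 2 ≤ W2 k x := by
        have hle := ENNReal.le_tsum (f := fun j => (Eavg σ (bc k j) (lss k j)) ^ 2 *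
          cubeInd (bc' k j) (lss k j) x) j
        unfold cubeInd at hle
        rw [Set.indicator_of_mem hj, mul_one] at hle
        simpa only [hW2, cubeInd] using hle
      have h2 : cubeInd (ac' k) (ls k) x = 1 := by
        unfold cubeInd; rw [Set.indicator_of_mem (hsub' k j hj)]
      have hu1 : ENNReal.ofReal |aa k| * Eavg σ (bc k j) (lss k j) ≤ u k := by
        simp only [hu]
        calc ENNReal.ofReal |aa k| * Eavg σ (bc k j) (lss k j)
            = ((ENNReal.ofReal |aa k| * Eavg σ (bc k j) (lss k j)) ^ 2) ^ ((1:ℝ)/2) :=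
              (hsqrt_sq _).symm
          _ ≤ _ := by
              refine ENNReal.rpow_le_rpow ?_ (by norm_num)
              rw [mul_pow, ← hofReal_sq]
              exact mul_le_mul' le_rfl h1
      have hv1 : ENNReal.ofReal |bb k| ≤ v k := by
        simp only [hv]
        rw [h2, mul_one, hofReal_sq, hsqrt_sq]
      calc ENNReal.ofReal |aa k| * ENNReal.ofReal |bb k| * Eavg σ (bc k j) (lss k j)
          = (ENNReal.ofReal |aa k| * Eavg σ (bc k j) (lss k j)) * ENNReal.ofReal |bb k| := by
            ring
        _ ≤ u k * v k := mul_le_mul' hu1 hv1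
    refine le_trans (ENNReal.tsum_le_tsum hterm) ?_
    refine le_trans (tsum_mul_le_sqrt u v) (le_of_eq ?_)
    congr 1
    · congr 1
      exact tsum_congr fun k => by simp only [hu]; rw [hsq]
    · congr 1
      exact tsum_congr fun k => by simp only [hv]; rw [hsq]
  -- bound the numerator by the integral of the Whitney sums
  have hNum1 : NUM ≤ (ENNReal.ofReal CK * ENNReal.ofReal Ch) *
      ∫⁻ x, (∑' k, ENNReal.ofReal |aa k| * ENNReal.ofReal |bb k| * W k x) ∂ω := by
    rw [hNUM]
    have hk : ∀ k, ENNReal.ofReal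
        |∫ x in cubeSet (ac' k) (ls k),
            (aa k * ∫ y in cubeSet (ac k) (ls k), K x y ∂σ) * bb k ∂ω| ≤
        (ENNReal.ofReal CK * ENNReal.ofReal Ch) *
          (ENNReal.ofReal |aa k| * ENNReal.ofReal |bb k| *
            ∑' j, Eavg σ (bc k j) (lss k j) * ω (cubeSet (bc' k j) (lss k j))) := by
      intro k
      have hb := numerator_bound hCK K hKb σ ω _ _ (measurableSet_cubeSet (ac k) (ls k))
        (adjacent_disjoint (hls k).1 (hls k).2) (aa k) (bb k)
      refine le_trans hb (le_trans (mul_le_mul' le_rfl (mul_le_mul' le_rfl (hint k)))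
        (le_of_eq ?_))
      ring
    refine le_trans (ENNReal.tsum_le_tsum hk) ?_
    rw [ENNReal.tsum_mul_left]
    refine mul_le_mul' le_rfl (le_of_eq ?_)
    have hTk : ∀ k, (∑' j, Eavg σ (bc k j) (lss k j) * ω (cubeSet (bc' k j) (lss k j))) =
        ∫⁻ x, W k x ∂ω := by
      intro k
      simp only [hW]
      rw [lintegral_tsum fun j => ((measurable_cubeInd _ _).const_mul _).aemeasurable]
      refine tsum_congr fun j => ?_
      rw [lintegral_const_mul'' _ (measurable_cubeInd _ _).aemeasurable, lintegral_cubeInd]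
    calc ∑' k, ENNReal.ofReal |aa k| * ENNReal.ofReal |bb k| *
          ∑' j, Eavg σ (bc k j) (lss k j) * ω (cubeSet (bc' k j) (lss k j))
        = ∑' k, ∫⁻ x, ENNReal.ofReal |aa k| * ENNReal.ofReal |bb k| * W k x ∂ω := by
          refine tsum_congr fun k => ?_
          rw [hTk k, lintegral_const_mul'' _ (hmW k).aemeasurable]
      _ = ∫⁻ x, ∑' k, ENNReal.ofReal |aa k| * ENNReal.ofReal |bb k| * W k x ∂ω :=
          (lintegral_tsum fun k => (((hmW k).const_mul _).aemeasurable)).symm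
  -- Hölder
  have hHold : ∫⁻ x, (∑' k, ENNReal.ofReal ((aa k) ^ 2) * W2 k x) ^ ((1:ℝ)/2) *
        (∑' k, ENNReal.ofReal ((bb k) ^ 2) * cubeInd (ac' k) (ls k) x) ^ ((1:ℝ)/2) ∂ω ≤
      (∫⁻ x, (∑' k, ENNReal.ofReal ((aa k) ^ 2) * W2 k x) ^ (p/2) ∂ω) ^ (1/p) *
        Iω ^ (1/p') := by
    have hH := ENNReal.lintegral_mul_le_Lp_mul_Lq ω hpq
      ((hmA'.pow_const ((1:ℝ)/2)).aemeasurable) ((hmFω.pow_const ((1:ℝ)/2)).aemeasurable)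
    simp only [Pi.mul_apply, ← ENNReal.rpow_mul] at hH
    have he1 : (1:ℝ)/2 * p = p/2 := by ring
    have he2 : (1:ℝ)/2 * p' = p'/2 := by ring
    rw [he1, he2] at hH
    rw [hIω]
    exact hH
  -- identify the numerator integral with the reindexed family
  set JN := ∫⁻ x, (∑' m : ℕ, ENNReal.ofReal ((PA (e m)) ^ 2) *
      (Eavg σ (PB (e m)) (PL (e m))) ^ 2 * cubeInd (PB' (e m)) (PL (e m)) x) ^ (p/2) ∂ω
    with hJN
  set J1 := ∫⁻ x, (∑' m : ℕ, ENNReal.ofReal ((PA (e m)) ^ 2) *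
      cubeInd (PB (e m)) (PL (e m)) x) ^ (p/2) ∂σ with hJ1def
  have hN1eq : JN = ∫⁻ x, (∑' k, ENNReal.ofReal ((aa k) ^ 2) * W2 k x) ^ (p/2) ∂ω := by
    rw [hJN]
    exact lintegral_congr fun x => by rw [hAid x]
  have hD1le : J1 ≤ Iσ := by
    rw [hJ1def, hIσ]
    exact lintegral_mono fun x => ENNReal.rpow_le_rpow (hG1le x) (le_of_lt hp2)
  -- bound the first Hölder factor using the offset Muckenhoupt constant
  have hN1Dσ : JN ^ (1/p) ≤ AoffConst p (c2 + 1) σ ω * Iσ ^ (1/p) := by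
    by_cases hJ10 : J1 = 0
    · have hJN0 : JN = 0 := by
        have hzero : ∀ x, (∑' m : ℕ, ENNReal.ofReal ((PA (e m)) ^ 2) *
            (Eavg σ (PB (e m)) (PL (e m))) ^ 2 * cubeInd (PB' (e m)) (PL (e m)) x) = 0 := by
          intro x
          convert tsum_zero with m
          have hz := term_zero_of_lintegral_zero σ hp2
            (fun m => ENNReal.ofReal ((PA (e m)) ^ 2)) (fun m => ENNReal.ofReal_ne_top)
            (fun m => PB (e m)) (fun m => PL (e m)) (hJ1def ▸ hJ10) m
          rcases mul_eq_zero.mp hz with hz | hz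
          · rw [hz, zero_mul, zero_mul]
          · have hE : Eavg σ (PB (e m)) (PL (e m)) = 0 := by
              unfold Eavg; rw [hz, ENNReal.zero_div]
            rw [hE]
            simp
        rw [hJN]
        calc (∫⁻ x, (∑' m : ℕ, ENNReal.ofReal ((PA (e m)) ^ 2) *
              (Eavg σ (PB (e m)) (PL (e m))) ^ 2 * cubeInd (PB' (e m)) (PL (e m)) x) ^ (p/2) ∂ω)
            = ∫⁻ _, (0:ℝ≥0∞) ^ (p/2) ∂ω := lintegral_congr fun x => by rw [hzero x]
          _ = 0 := by rw [ENNReal.zero_rpow_of_pos hp2, lintegral_zero]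
      rw [hJN0, ENNReal.zero_rpow_of_pos hip]
      exact zero_le
    · have hJ1ne : J1 ^ (1/p) ≠ 0 := by
        rw [Ne, ENNReal.rpow_eq_zero_iff]
        push_neg
        exact ⟨fun h => absurd h hJ10, fun _ => le_of_lt hip⟩
      have hJ1top : J1 ^ (1/p) ≠ ∞ :=
        ne_top_of_le_ne_top (ENNReal.rpow_ne_top_of_nonneg (le_of_lt hip) hσt)
          (ENNReal.rpow_le_rpow hD1le (le_of_lt hip))
      have hdiv := (ENNReal.div_le_iff hJ1ne hJ1top).mp hAoff
      exact le_trans hdiv (mul_le_mul' le_rfl (ENNReal.rpow_le_rpow hD1le (le_of_lt hip)))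
  -- assemble
  have hCle : ENNReal.ofReal CK * ENNReal.ofReal Ch ≤ ENNReal.ofReal ((CK + 1) * Ch) := by
    rw [← ENNReal.ofReal_mul hCK]
    exact ENNReal.ofReal_le_ofReal (by nlinarith)
  have hmain : NUM ≤ (ENNReal.ofReal ((CK + 1) * Ch) * AoffConst p (c2 + 1) σ ω) *
      (Iσ ^ (1/p) * Iω ^ (1/p')) := by
    calc NUM ≤ (ENNReal.ofReal CK * ENNReal.ofReal Ch) *
          ∫⁻ x, (∑' k, ENNReal.ofReal |aa k| * ENNReal.ofReal |bb k| * W k x) ∂ω := hNum1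
      _ ≤ (ENNReal.ofReal CK * ENNReal.ofReal Ch) *
          ∫⁻ x, (∑' k, ENNReal.ofReal ((aa k) ^ 2) * W2 k x) ^ ((1:ℝ)/2) *
            (∑' k, ENNReal.ofReal ((bb k) ^ 2) * cubeInd (ac' k) (ls k) x) ^ ((1:ℝ)/2) ∂ω :=
          mul_le_mul' le_rfl (lintegral_mono hCS)
      _ ≤ (ENNReal.ofReal CK * ENNReal.ofReal Ch) *
          ((∫⁻ x, (∑' k, ENNReal.ofReal ((aa k) ^ 2) * W2 k x) ^ (p/2) ∂ω) ^ (1/p) *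
            Iω ^ (1/p')) := mul_le_mul' le_rfl hHold
      _ = (ENNReal.ofReal CK * ENNReal.ofReal Ch) * (JN ^ (1/p) * Iω ^ (1/p')) := by
          rw [hN1eq]
      _ ≤ (ENNReal.ofReal CK * ENNReal.ofReal Ch) *
          ((AoffConst p (c2 + 1) σ ω * Iσ ^ (1/p)) * Iω ^ (1/p')) :=
          mul_le_mul' le_rfl (mul_le_mul' hN1Dσ le_rfl)
      _ = ((ENNReal.ofReal CK * ENNReal.ofReal Ch) * AoffConst p (c2 + 1) σ ω) *
          (Iσ ^ (1/p) * Iω ^ (1/p')) := by ring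
      _ ≤ _ := mul_le_mul' (mul_le_mul' hCle le_rfl) le_rfl
  have hb0 : Iσ ^ (1/p) * Iω ^ (1/p') ≠ 0 := by
    apply mul_ne_zero
    · rw [Ne, ENNReal.rpow_eq_zero_iff]; push_neg
      exact ⟨fun h => absurd h hσ0, fun _ => le_of_lt hip⟩
    · rw [Ne, ENNReal.rpow_eq_zero_iff]; push_neg
      exact ⟨fun h => absurd h hω0, fun _ => le_of_lt hip'⟩
  have hbt : Iσ ^ (1/p) * Iω ^ (1/p') ≠ ∞ :=
    ENNReal.mul_ne_top (ENNReal.rpow_ne_top_of_nonneg (le_of_lt hip) hσt)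
      (ENNReal.rpow_ne_top_of_nonneg (le_of_lt hip') hωt)
  rw [ENNReal.div_le_iff hb0 hbt]
  exact hmain
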